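/- Let (G,v₀,W) be a Banach–Mazur game on a finite graph where W is a countable intersection of open subsets of Paths(G,v₀), and let P be a reasonable probability measure on Paths(G,v₀). Then the following are equivalent: (1) P(W) = 1; (2) Player 0 has a winning α-strategy for some α > 0; (3) Player 0 has a winning α-strategy for every α with 0 < α < 1. -/

import Mathlib

open MeasureTheory
open scoped ENNReal NNReal

namespace BMGame

variable {V : Type*}

/-- The prefix of length `n` of the infinite sequence `ρ`. -/
def pref (ρ : ℕ → V) (n : ℕ) : List V := (List.range n).map ρ

/-- `ρ` is an infinite path of the graph `E` starting at `v₀`. -/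
def IsPlay (E : V → V → Prop) (v₀ : V) (ρ : ℕ → V) : Prop :=
  ρ 0 = v₀ ∧ ∀ n, E (ρ n) (ρ (n + 1))

/-- `π` is a nonempty finite path of the graph `E` starting at `v₀` (a position of the game). -/
def IsPos (E : V → V → Prop) (v₀ : V) (π : List V) : Prop :=
  π.head? = some v₀ ∧ π.Chain' E

/-- A strategy for player 0 assigns to each position the (nonempty) block of vertices
appended by player 0's move; `(π ++ f π).Chain' E` says that this block is a path
starting at the last vertex of `π`. -/
def IsStrategy (E : V → V → Prop) (v₀ : V) (f : List V → List V) : Prop :=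
  ∀ π, IsPos E v₀ π → f π ≠ [] ∧ (π ++ f π).Chain' E

/-- The play `ρ` is consistent with the strategy `f`: there are cut points
`c 0, c 1, …` (the lengths of the prefixes built after each move of player 1) such that
after each such prefix player 0 plays according to `f`, and player 1 then appends a
nonempty block. -/
def ConsGen (f : List V → List V) (ρ : ℕ → V) : Prop :=
  ∃ c : ℕ → ℕ, 1 ≤ c 0 ∧ ∀ i,
    pref ρ (c i + (f (pref ρ (c i))).length) = pref ρ (c i) ++ f (pref ρ (c i)) ∧
    c i + (f (pref ρ (c i))).length < c (i + 1)

/-- `f` is a winning strategy for player 0 in the Banach–Mazur game `(E, v₀, W)`. -/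
def WinningStrategy (E : V → V → Prop) (v₀ : V) (W : Set (ℕ → V))
    (f : List V → List V) : Prop :=
  IsStrategy E v₀ f ∧ ∀ ρ, IsPlay E v₀ ρ → ConsGen f ρ → ρ ∈ W

/-- The strategy `f` is `b`-bounded: each of its moves has length at most `b`. -/
def BoundedBy (E : V → V → Prop) (v₀ : V) (b : ℕ) (f : List V → List V) : Prop :=
  ∀ π, IsPos E v₀ π → (f π).length ≤ b

/-- A positional strategy assigns to each vertex the nonempty block appended. -/
def IsPositional (E : V → V → Prop) (f : V → List V) : Prop :=
  ∀ v, f v ≠ [] ∧ (v :: f v).Chain' E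

/-- Consistency with a positional strategy: after each prefix chosen by player 1,
player 0 plays `f` of the current (last) vertex. -/
def ConsPositional (f : V → List V) (ρ : ℕ → V) : Prop :=
  ∃ c : ℕ → ℕ, 1 ≤ c 0 ∧ ∀ i,
    pref ρ (c i + (f (ρ (c i - 1))).length) = pref ρ (c i) ++ f (ρ (c i - 1)) ∧
    c i + (f (ρ (c i - 1))).length < c (i + 1)

def PositionalWinning (E : V → V → Prop) (v₀ : V) (W : Set (ℕ → V)) (f : V → List V) : Prop :=
  IsPositional E f ∧ ∀ ρ, IsPlay E v₀ ρ → ConsPositional f ρ → ρ ∈ W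

/-- Structural requirement shared by move-counting and length-counting strategies:
for `n ≥ 1`, `h v n` is a nonempty block forming a path from `v`. -/
def IsCountingStrategy (E : V → V → Prop) (h : V → ℕ → List V) : Prop :=
  ∀ v n, 1 ≤ n → h v n ≠ [] ∧ (v :: h v n).Chain' E

/-- Consistency with a move-counting strategy: at its `i`-th move (`i ≥ 1`) player 0 plays
`h (current vertex) i`. -/
def ConsMoveCounting (h : V → ℕ → List V) (ρ : ℕ → V) : Prop :=
  ∃ c : ℕ → ℕ, 1 ≤ c 0 ∧ ∀ i,
    pref ρ (c i + (h (ρ (c i - 1)) (i + 1)).length) = pref ρ (c i) ++ h (ρ (c i - 1)) (i + 1) ∧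
    c i + (h (ρ (c i - 1)) (i + 1)).length < c (i + 1)

def MoveCountingWinning (E : V → V → Prop) (v₀ : V) (W : Set (ℕ → V))
    (h : V → ℕ → List V) : Prop :=
  IsCountingStrategy E h ∧ ∀ ρ, IsPlay E v₀ ρ → ConsMoveCounting h ρ → ρ ∈ W

/-- Consistency with a length-counting strategy: after a prefix of length `c i`
player 0 plays `h (current vertex) (c i)`. -/
def ConsLengthCounting (h : V → ℕ → List V) (ρ : ℕ → V) : Prop :=
  ∃ c : ℕ → ℕ, 1 ≤ c 0 ∧ ∀ i,
    pref ρ (c i + (h (ρ (c i - 1)) (c i)).length) = pref ρ (c i) ++ h (ρ (c i - 1)) (c i) ∧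
    c i + (h (ρ (c i - 1)) (c i)).length < c (i + 1)

def LengthCountingWinning (E : V → V → Prop) (v₀ : V) (W : Set (ℕ → V))
    (h : V → ℕ → List V) : Prop :=
  IsCountingStrategy E h ∧ ∀ ρ, IsPlay E v₀ ρ → ConsLengthCounting h ρ → ρ ∈ W

/-- The segment `ρ a, ρ (a+1), …, ρ (b-1)` of an infinite sequence. -/
def seg (ρ : ℕ → V) (a b : ℕ) : List V := (List.range (b - a)).map fun j => ρ (a + j)

/-- A last-move strategy is defined on all nonempty finite paths of the graph. -/
def IsLastMove (E : V → V → Prop) (g : List V → List V) : Prop :=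
  ∀ π, π ≠ [] → π.Chain' E → g π ≠ [] ∧ (π ++ g π).Chain' E

/-- Consistency with the last-move strategy `g`: the play decomposes as
`π₁ g(π₁) π₂ g(π₂) ⋯` where the `πᵢ` are the (nonempty) moves of player 1. -/
def ConsLastMove (g : List V → List V) (ρ : ℕ → V) : Prop :=
  ∃ s e : ℕ → ℕ, s 0 = 0 ∧ (∀ i, s i < e i) ∧ ∀ i,
    seg ρ (e i) (e i + (g (seg ρ (s i) (e i))).length) = g (seg ρ (s i) (e i)) ∧
    s (i + 1) = e i + (g (seg ρ (s i) (e i))).length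

def LastMoveWinning (E : V → V → Prop) (v₀ : V) (W : Set (ℕ → V)) (g : List V → List V) : Prop :=
  IsLastMove E g ∧ ∀ ρ, IsPlay E v₀ ρ → ConsLastMove g ρ → ρ ∈ W

/-- The cylinder generated by the finite word `π`. -/
def Cyl (π : List V) : Set (ℕ → V) := {ρ | pref ρ π.length = π}

/-- One-step transition probabilities obtained from the weights `w`. -/
noncomputable def transP [Fintype V] (E : V → V → Prop) (w : V → V → ℝ≥0) (u v : V) : ℝ≥0∞ := by
  classical
  exact if E u v then
    (w u v : ℝ≥0∞) / ∑ x ∈ Finset.univ.filter (fun x => E u x), (w u x : ℝ≥0∞)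
  else 0

/-- The probability of the cylinder generated by a finite word: the product of the
one-step transition probabilities along it. -/
noncomputable def pathP [Fintype V] (E : V → V → Prop) (w : V → V → ℝ≥0) (π : List V) : ℝ≥0∞ :=
  ((π.zip π.tail).map fun q => transP E w q.1 q.2).prod

/-- `P` is the reasonable probability measure associated with the weights `w`. -/
def IsReasonable [Fintype V] [MeasurableSpace (ℕ → V)] (E : V → V → Prop) (v₀ : V)
    (w : V → V → ℝ≥0) (P : Measure (ℕ → V)) : Prop :=
  IsProbabilityMeasure P ∧ ∀ π : List V, π.head? = some v₀ → P (Cyl π) = pathP E w π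

/-- `Ps` is a legal move of player 0 in the generalised game `G_α` at position `π`: a
finite nonempty set of nonempty finite paths from the last vertex of `π` whose union of
cylinders has conditional probability at least `α` given `Cyl π`. -/
def LegalProposal [MeasurableSpace (ℕ → V)] (E : V → V → Prop) (P : Measure (ℕ → V)) (α : ℝ)
    (π : List V) (Ps : Finset (List V)) : Prop :=
  Ps.Nonempty ∧ (∀ τ ∈ Ps, τ ≠ [] ∧ (π ++ τ).Chain' E) ∧
    ENNReal.ofReal α ≤ P (⋃ τ ∈ Ps, Cyl (π ++ τ)) / P (Cyl π)

/-- An α-strategy for player 0. -/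
def IsAlphaStrategy [MeasurableSpace (ℕ → V)] (E : V → V → Prop) (v₀ : V) (P : Measure (ℕ → V))
    (α : ℝ) (f : List V → Finset (List V)) : Prop :=
  ∀ π, IsPos E v₀ π → LegalProposal E P α π (f π)

/-- Consistency with an α-strategy: at each stage, player 1 picks some element of the
set proposed by player 0 and appends a nonempty block after it. -/
def ConsAlpha (f : List V → Finset (List V)) (ρ : ℕ → V) : Prop :=
  ∃ c : ℕ → ℕ, 1 ≤ c 0 ∧ ∀ i, ∃ τ ∈ f (pref ρ (c i)),
    pref ρ (c i + τ.length) = pref ρ (c i) ++ τ ∧ c i + τ.length < c (i + 1)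

def AlphaWinning [MeasurableSpace (ℕ → V)] (E : V → V → Prop) (v₀ : V) (P : Measure (ℕ → V))
    (α : ℝ) (W : Set (ℕ → V)) (f : List V → Finset (List V)) : Prop :=
  IsAlphaStrategy E v₀ P α f ∧ ∀ ρ, IsPlay E v₀ ρ → ConsAlpha f ρ → ρ ∈ W

/-- A strategy for player 1 in the generalised game `G_α` consists of an initial path and,
for each position together with a legal proposal of player 0, the selected element of the
proposal and the next (nonempty) block played by player 1. -/
def IsP1Strategy [MeasurableSpace (ℕ → V)] (E : V → V → Prop) (v₀ : V) (P : Measure (ℕ → V))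
    (α : ℝ) (init : List V) (g : List V → Finset (List V) → List V × List V) : Prop :=
  IsPos E v₀ init ∧
    ∀ π Ps, IsPos E v₀ π → LegalProposal E P α π Ps →
      (g π Ps).1 ∈ Ps ∧ (g π Ps).2 ≠ [] ∧ (π ++ ((g π Ps).1 ++ (g π Ps).2)).Chain' E

/-- Consistency of a play with player 1's strategy `(init, g)`:
there is a sequence of legal proposals of player 0 generating the play. -/
def ConsP1 [MeasurableSpace (ℕ → V)] (E : V → V → Prop) (P : Measure (ℕ → V)) (α : ℝ)
    (init : List V) (g : List V → Finset (List V) → List V × List V) (ρ : ℕ → V) : Prop :=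
  ∃ (Ps : ℕ → Finset (List V)) (p : ℕ → List V), p 0 = init ∧
    (∀ n, pref ρ (p n).length = p n) ∧
    ∀ n, LegalProposal E P α (p n) (Ps n) ∧
      p (n + 1) = p n ++ ((g (p n) (Ps n)).1 ++ (g (p n) (Ps n)).2)

def P1Winning [MeasurableSpace (ℕ → V)] (E : V → V → Prop) (v₀ : V) (P : Measure (ℕ → V))
    (α : ℝ) (W : Set (ℕ → V)) (init : List V)
    (g : List V → Finset (List V) → List V × List V) : Prop :=
  IsP1Strategy E v₀ P α init g ∧ ∀ ρ, IsPlay E v₀ ρ → ConsP1 E P α init g ρ → ρ ∉ W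

/-- A union of cylinders, i.e. an open subset of the space of sequences. -/
def IsCylOpen (U : Set (ℕ → V)) : Prop :=
  ∃ S : Set (List V), U = ⋃ π ∈ S, Cyl π

/-- `W` is a countable intersection of open subsets of the space `Paths (G, v₀)`. -/
def IsCountableInterOfOpens (E : V → V → Prop) (v₀ : V) (W : Set (ℕ → V)) : Prop :=
  ∃ U : ℕ → Set (ℕ → V), (∀ n, IsCylOpen (U n)) ∧
    W = {ρ | IsPlay E v₀ ρ} ∩ ⋂ n, U n

/-- For every `n`, the concatenation of the blocks `u 0, …, u (n-1)` is a prefix of `ρ`. -/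
def AgreesWithBlocks (ρ : ℕ → V) (u : ℕ → List V) : Prop :=
  ∀ n, pref ρ (((List.range n).map u).flatten).length = ((List.range n).map u).flatten

variable {V : Type*}

@[simp] lemma pref_length (ρ : ℕ → V) (n : ℕ) : (pref ρ n).length = n := by
  simp [pref]

lemma pref_get (ρ : ℕ → V) {n i : ℕ} (h : i < n) :
    (pref ρ n).get ⟨i, by simpa [pref] using h⟩ = ρ i := by
  simp [pref]

lemma pref_add (ρ : ℕ → V) (m k : ℕ) :
    pref ρ (m + k) = pref ρ m ++ (List.range k).map fun j => ρ (m + j) := by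
  simp [pref, List.range_add, List.map_map, Function.comp]

lemma pref_take (ρ : ℕ → V) {n m : ℕ} (h : n ≤ m) :
    (pref ρ m).take n = pref ρ n := by
  simp [pref, ← List.map_take, List.take_range, Nat.min_eq_left h]

lemma mem_Cyl {π : List V} {ρ : ℕ → V} : ρ ∈ Cyl π ↔ pref ρ π.length = π := Iff.rfl

lemma mem_Cyl_pref (ρ : ℕ → V) (n : ℕ) : ρ ∈ Cyl (pref ρ n) := by
  simp [mem_Cyl]

lemma Cyl_subset_of_take {π σ : List V} (hn : π.length ≤ σ.length)
    (h : σ.take π.length = π) : Cyl σ ⊆ Cyl π := by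
  intro ρ hρ
  rw [mem_Cyl] at hρ ⊢
  have h2 := pref_take ρ hn
  rw [hρ, h] at h2
  exact h2.symm

lemma take_of_mem_Cyl {π σ : List V} {ρ : ℕ → V} (hρσ : ρ ∈ Cyl σ) (hρπ : ρ ∈ Cyl π)
    (hn : π.length ≤ σ.length) : σ.take π.length = π := by
  rw [mem_Cyl] at hρσ hρπ
  rw [← hρσ, pref_take ρ hn, hρπ]

lemma Cyl_append_subset (π τ : List V) : Cyl (π ++ τ) ⊆ Cyl π := by
  apply Cyl_subset_of_take (by simp) (by simp [List.take_append])

lemma Cyl_nonempty [Inhabited V] (σ : List V) : (Cyl σ).Nonempty := by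
  refine ⟨fun i => σ.getD i default, ?_⟩
  rw [mem_Cyl]
  apply List.ext_get (by simp)
  intro i h1 h2
  rw [pref_get]
  · simp [List.getD_eq_getElem?_getD, List.getElem?_eq_getElem h2]
  · simpa using h1

lemma Cyl_disjoint {π σ : List V} (hl : π.length = σ.length) (hne : π ≠ σ) :
    Disjoint (Cyl π) (Cyl σ) := by
  rw [Set.disjoint_left]
  intro ρ h1 h2
  rw [mem_Cyl] at h1 h2
  exact hne (by rw [← h1, hl, h2])

lemma measurableSet_Cyl [MeasurableSpace V] [DiscreteMeasurableSpace V] (π : List V) :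
    MeasurableSet (Cyl π) := by
  have : Cyl π = ⋂ i : Fin π.length, {ρ : ℕ → V | ρ i = π.get i} := by
    ext ρ
    simp only [mem_Cyl, Set.mem_iInter, Set.mem_setOf_eq]
    constructor
    · intro h i
      have e1 := pref_get ρ (n := π.length) i.2
      rw [List.get_of_eq h] at e1
      exact e1.symm
    · intro h
      apply List.ext_get (by simp)
      intro i h1 h2
      exact (pref_get ρ h2).trans (h ⟨i, h2⟩)
  rw [this]
  exact MeasurableSet.iInter fun i =>
    (measurable_pi_apply (i : ℕ)) (MeasurableSet.singleton _)

lemma chain'_pref {E : V → V → Prop} {v₀ : V} {ρ : ℕ → V} (hρ : IsPlay E v₀ ρ) (n : ℕ) :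
    (pref ρ n).Chain' E := by
  rw [List.Chain', List.isChain_iff_getElem]
  intro i h
  simp only [pref_length] at h
  simpa [pref] using hρ.2 i

lemma head?_pref {ρ : ℕ → V} {n : ℕ} (hn : 1 ≤ n) : (pref ρ n).head? = some (ρ 0) := by
  obtain ⟨k, rfl⟩ : ∃ k, n = k + 1 := ⟨n - 1, by omega⟩
  simp [pref, List.range_succ_eq_map]

lemma isPos_pref {E : V → V → Prop} {v₀ : V} {ρ : ℕ → V} (hρ : IsPlay E v₀ ρ) {n : ℕ}
    (hn : 1 ≤ n) : IsPos E v₀ (pref ρ n) :=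
  ⟨by rw [head?_pref hn, hρ.1], chain'_pref hρ n⟩

section PathP
variable [Fintype V] {E : V → V → Prop} {w : V → V → ℝ≥0}

lemma transP_eq_zero {u v : V} (h : ¬ E u v) : transP E w u v = 0 := by
  simp [transP, h]

lemma transP_pos (hE : ∀ x, ∃ y, E x y) (hw : ∀ u v, E u v → 0 < w u v)
    {u v : V} (h : E u v) : 0 < transP E w u v ∧ transP E w u v < ⊤ := by
  classical
  have hD1 : (w u v : ℝ≥0∞) ≤ ∑ x ∈ Finset.univ.filter (fun x => E u x), (w u x : ℝ≥0∞) :=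
    Finset.single_le_sum (f := fun x => (w u x : ℝ≥0∞)) (fun _ _ => zero_le)
      (by simp [h])
  have hD0 : (∑ x ∈ Finset.univ.filter (fun x => E u x), (w u x : ℝ≥0∞)) ≠ 0 := by
    intro h0
    rw [h0] at hD1
    have : (w u v : ℝ≥0∞) = 0 := le_antisymm hD1 zero_le
    exact absurd this (by simpa using (hw u v h).ne')
  have hDtop : (∑ x ∈ Finset.univ.filter (fun x => E u x), (w u x : ℝ≥0∞)) ≠ ⊤ := by
    refine (ENNReal.sum_lt_top.2 fun x _ => ?_).ne
    exact ENNReal.coe_lt_top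
  constructor
  · rw [transP, if_pos h]
    exact ENNReal.div_pos (by simpa using (hw u v h).ne') hDtop
  · rw [transP, if_pos h]
    exact ENNReal.div_lt_top ENNReal.coe_ne_top hD0

@[simp] lemma pathP_nil : pathP E w ([] : List V) = 1 := by simp [pathP]

@[simp] lemma pathP_singleton (v : V) : pathP E w [v] = 1 := by simp [pathP]

lemma pathP_cons_cons (a b : V) (l : List V) :
    pathP E w (a :: b :: l) = transP E w a b * pathP E w (b :: l) := by
  simp [pathP]

lemma pathP_pos (hE : ∀ x, ∃ y, E x y) (hw : ∀ u v, E u v → 0 < w u v)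
    {π : List V} (h : π.Chain' E) : 0 < pathP E w π ∧ pathP E w π < ⊤ := by
  induction π with
  | nil => simp
  | cons a l ih =>
    cases l with
    | nil => simp
    | cons b l' =>
      rw [List.Chain', List.isChain_cons_cons] at h
      obtain ⟨h1, h2⟩ := h
      obtain ⟨p1, p2⟩ := ih h2
      obtain ⟨q1, q2⟩ := transP_pos hE hw h1
      rw [pathP_cons_cons]
      exact ⟨ENNReal.mul_pos q1.ne' p1.ne', ENNReal.mul_lt_top q2 p2⟩

lemma pathP_eq_zero {π : List V} (h : ¬ π.Chain' E) : pathP E w π = 0 := by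
  induction π with
  | nil => exact absurd List.isChain_nil h
  | cons a l ih =>
    cases l with
    | nil => exact absurd (List.isChain_singleton a) h
    | cons b l' =>
      rw [List.Chain', List.isChain_cons_cons] at h
      push_neg at h
      rw [pathP_cons_cons]
      by_cases hab : E a b
      · rw [ih (h hab), mul_zero]
      · rw [transP_eq_zero hab, zero_mul]

end PathP

section MeasureFacts
variable [Fintype V] [MeasurableSpace V] [DiscreteMeasurableSpace V]
  {E : V → V → Prop} {v₀ : V} {w : V → V → ℝ≥0} {P : Measure (ℕ → V)}

lemma P_Cyl_pos (hP : IsReasonable E v₀ w P) (hE : ∀ x, ∃ y, E x y)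
    (hw : ∀ u v, E u v → 0 < w u v) {π : List V} (h : IsPos E v₀ π) :
    0 < P (Cyl π) ∧ P (Cyl π) < ⊤ := by
  rw [hP.2 π h.1]
  exact pathP_pos hE hw h.2

lemma P_Cyl_null_nonchain (hP : IsReasonable E v₀ w P) {π : List V}
    (hh : π.head? = some v₀) (hc : ¬ π.Chain' E) : P (Cyl π) = 0 := by
  rw [hP.2 π hh]
  exact pathP_eq_zero hc

lemma Cyl_singleton (v : V) : Cyl [v] = {ρ : ℕ → V | ρ 0 = v} := by
  ext ρ
  simp [mem_Cyl, pref, List.range_succ]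

lemma P_Cyl_null_head (hP : IsReasonable E v₀ w P) {π : List V}
    (hne : π ≠ []) (hh : π.head? ≠ some v₀) : P (Cyl π) = 0 := by
  have h1 : IsProbabilityMeasure P := hP.1
  have hv0 : P (Cyl [v₀]) = 1 := by
    rw [hP.2 [v₀] rfl, pathP_singleton]
  have hcomp : P (Cyl [v₀])ᶜ = 0 := by
    rw [prob_compl_eq_zero_iff (measurableSet_Cyl _)]
    exact hv0
  refine measure_mono_null ?_ hcomp
  obtain ⟨v, t, rfl⟩ := List.exists_cons_of_ne_nil hne
  intro ρ hρ
  have h2 : ρ ∈ Cyl [v] := by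
    have := Cyl_subset_of_take (π := [v]) (σ := v :: t) (by simp) (by simp) hρ
    exact this
  rw [Cyl_singleton] at h2
  simp only [Set.mem_compl_iff, Cyl_singleton, Set.mem_setOf_eq]
  intro h3
  exact hh (by simp_all)

lemma P_Cyl_null (hP : IsReasonable E v₀ w P) {π : List V}
    (hne : π ≠ []) (hpos : ¬ IsPos E v₀ π) : P (Cyl π) = 0 := by
  by_cases hh : π.head? = some v₀
  · exact P_Cyl_null_nonchain hP hh (fun hc => hpos ⟨hh, hc⟩)
  · exact P_Cyl_null_head hP hne hh

lemma P_nonPlays (hP : IsReasonable E v₀ w P) :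
    P {ρ | ¬ IsPlay E v₀ ρ} = 0 := by
  have hsub : {ρ | ¬ IsPlay E v₀ ρ} ⊆
      ⋃ (σ : List V) (_ : σ ≠ [] ∧ ¬ IsPos E v₀ σ), Cyl σ := by
    intro ρ hρ
    simp only [Set.mem_setOf_eq, IsPlay, not_and, not_forall] at hρ
    by_cases h0 : ρ 0 = v₀
    · obtain ⟨n, hn⟩ := hρ h0
      refine Set.mem_iUnion₂.2 ⟨pref ρ (n + 2), ⟨?_, ?_⟩, mem_Cyl_pref ρ _⟩
      · intro h; have := congrArg List.length h; simp at this
      · intro hpos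
        have hc := hpos.2
        rw [List.Chain', List.isChain_iff_getElem] at hc
        have := hc n (by simp)
        simp [pref] at this
        exact hn this
    · refine Set.mem_iUnion₂.2 ⟨pref ρ 1, ⟨?_, ?_⟩, mem_Cyl_pref ρ _⟩
      · intro h; have := congrArg List.length h; simp at this
      · intro hpos
        have := hpos.1
        rw [head?_pref le_rfl] at this
        exact h0 (by simpa using this)
  refine measure_mono_null hsub (measure_iUnion_null fun σ => ?_)
  by_cases h : σ ≠ [] ∧ ¬ IsPos E v₀ σ
  · refine measure_mono_null (Set.iUnion_subset fun _ => le_rfl) (P_Cyl_null hP h.1 h.2)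
  · simp [h]

end MeasureFacts

section BtoA
variable [Fintype V] [MeasurableSpace V] [DiscreteMeasurableSpace V]
  {E : V → V → Prop} {v₀ : V} {w : V → V → ℝ≥0} {P : Measure (ℕ → V)} {α : ℝ}
  {W : Set (ℕ → V)}

/-- Max length of a proposed block. -/
def Lmax (f : List V → Finset (List V)) (π : List V) : ℕ := (f π).sup List.length

/-- The next deterministic checkpoint length. -/
def nextLen (f : List V → Finset (List V)) (π : List V) : ℕ := π.length + Lmax f π + 1

/-- The union of the cylinders proposed at `π`. -/
def Bset (f : List V → Finset (List V)) (π : List V) : Set (ℕ → V) :=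
  ⋃ τ ∈ f π, Cyl (π ++ τ)

/-- Extensions of `π` to the next checkpoint that avoid the proposal. -/
def FailExt (f : List V → Finset (List V)) (π : List V) : Set (List V) :=
  {π' | π'.length = nextLen f π ∧ π'.take π.length = π ∧ Disjoint (Cyl π') (Bset f π)}

/-- Plays failing the proposal `j` consecutive times from `π` on. -/
def Nset (f : List V → Finset (List V)) : ℕ → List V → Set (ℕ → V)
  | 0, π => Cyl π
  | j+1, π => ⋃ π' ∈ FailExt f π, Nset f j π'

lemma Bset_subset (f : List V → Finset (List V)) (π : List V) : Bset f π ⊆ Cyl π :=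
  Set.iUnion₂_subset fun τ _ => Cyl_append_subset π τ

lemma measurableSet_Bset (f : List V → Finset (List V)) (π : List V) :
    MeasurableSet (Bset f π) :=
  (f π).measurableSet_biUnion fun τ _ => measurableSet_Cyl (π ++ τ)

lemma Nset_subset (f : List V → Finset (List V)) : ∀ j π, Nset f j π ⊆ Cyl π := by
  intro j
  induction j with
  | zero => intro π; exact le_rfl
  | succ j ih =>
    intro π
    refine Set.iUnion₂_subset fun π' hπ' => (ih π').trans ?_
    refine Cyl_subset_of_take ?_ hπ'.2.1
    rw [hπ'.1, nextLen]; omega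

lemma measurableSet_Nset (f : List V → Finset (List V)) : ∀ j π, MeasurableSet (Nset f j π) := by
  intro j
  induction j with
  | zero => intro π; exact measurableSet_Cyl π
  | succ j ih =>
    intro π
    exact MeasurableSet.biUnion (Set.to_countable _) fun π' _ => ih π'

lemma head?_of_take {π π' : List V} {v : V} (h : π'.take π.length = π)
    (hh : π.head? = some v) : π'.head? = some v := by
  have hne : π ≠ [] := by rintro rfl; simp at hh
  have := List.take_append_drop π.length π'
  rw [h] at this
  rw [← this]
  obtain ⟨a, t, rfl⟩ := List.exists_cons_of_ne_nil hne
  simpa using hh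

lemma Nset_bound (hP : IsReasonable E v₀ w P) {f : List V → Finset (List V)}
    (hf : IsAlphaStrategy E v₀ P α f) :
    ∀ j (π : List V), π.head? = some v₀ →
      P (Nset f j π) ≤ (1 - ENNReal.ofReal α) ^ j * P (Cyl π) := by
  intro j
  induction j with
  | zero => intro π _; simp [Nset]
  | succ j ih =>
    intro π hh
    haveI : IsProbabilityMeasure P := hP.1
    by_cases hc : π.Chain' E
    · -- π is a position
      have hpos : IsPos E v₀ π := ⟨hh, hc⟩
      have hleg := hf π hpos
      have hPC : P (Cyl π) ≠ ⊤ := measure_ne_top P _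
      have hB : ENNReal.ofReal α * P (Cyl π) ≤ P (Bset f π) := by
        have h1 := hleg.2.2
        by_cases h0 : P (Cyl π) = 0
        · rw [h0, mul_zero]; exact zero_le
        · exact (ENNReal.le_div_iff_mul_le (Or.inl h0) (Or.inl hPC)).1 h1
      have hBle : P (Bset f π) ≤ P (Cyl π) := measure_mono (Bset_subset f π)
      have hfail : P (Cyl π \ Bset f π) ≤ (1 - ENNReal.ofReal α) * P (Cyl π) := by
        rw [measure_diff (Bset_subset f π) (measurableSet_Bset f π).nullMeasurableSet
          (hBle.trans_lt hPC.lt_top).ne]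
        calc P (Cyl π) - P (Bset f π) ≤ P (Cyl π) - ENNReal.ofReal α * P (Cyl π) :=
              tsub_le_tsub_left hB _
          _ = (1 - ENNReal.ofReal α) * P (Cyl π) := by
              rw [ENNReal.sub_mul (fun _ _ => hPC), one_mul]
      calc P (Nset f (j + 1) π) ≤ ∑' π' : FailExt f π, P (Nset f j π') :=
            measure_biUnion_le P (Set.to_countable _) _
        _ ≤ ∑' π' : FailExt f π, (1 - ENNReal.ofReal α) ^ j * P (Cyl (π' : List V)) := by
            refine ENNReal.tsum_le_tsum fun π' => ih π' ?_
            exact head?_of_take π'.2.2.1 hh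
        _ = (1 - ENNReal.ofReal α) ^ j * ∑' π' : FailExt f π, P (Cyl (π' : List V)) := by
            rw [ENNReal.tsum_mul_left]
        _ = (1 - ENNReal.ofReal α) ^ j * P (⋃ π' ∈ FailExt f π, Cyl π') := by
            congr 1
            refine (measure_biUnion (Set.to_countable _) ?_ fun π' _ => measurableSet_Cyl π').symm
            intro a ha b hb hab
            exact Cyl_disjoint (by rw [ha.1, hb.1]) hab
        _ ≤ (1 - ENNReal.ofReal α) ^ j * P (Cyl π \ Bset f π) := by
            gcongr
            refine Set.iUnion₂_subset fun π' hπ' => ?_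
            refine Set.subset_diff.2 ⟨?_, hπ'.2.2⟩
            exact Cyl_subset_of_take (by rw [hπ'.1, nextLen]; omega) hπ'.2.1
        _ ≤ (1 - ENNReal.ofReal α) ^ j * ((1 - ENNReal.ofReal α) * P (Cyl π)) := by gcongr
        _ = (1 - ENNReal.ofReal α) ^ (j + 1) * P (Cyl π) := by ring
    · -- not a chain: the cylinder is null
      have h0 : P (Cyl π) = 0 := P_Cyl_null_nonchain hP hh hc
      have : P (Nset f (j+1) π) = 0 :=
        measure_mono_null (Nset_subset f (j+1) π) h0
      simp [this]

lemma P_iInter_Nset (hP : IsReasonable E v₀ w P) {f : List V → Finset (List V)}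
    (hf : IsAlphaStrategy E v₀ P α f) (hα : 0 < α) (π : List V)
    (hh : π.head? = some v₀) : P (⋂ j, Nset f j π) = 0 := by
  haveI : IsProbabilityMeasure P := hP.1
  have hβ : (1 - ENNReal.ofReal α) < 1 :=
    ENNReal.sub_lt_self ENNReal.one_ne_top one_ne_zero
      (by simpa using (ENNReal.ofReal_pos.2 hα).ne')
  have htend : Filter.Tendsto
      (fun j => (1 - ENNReal.ofReal α) ^ j * P (Cyl π)) Filter.atTop (nhds 0) := by
    have h1 := ENNReal.tendsto_pow_atTop_nhds_zero_of_lt_one hβ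
    have h2 := ENNReal.Tendsto.mul_const (b := P (Cyl π)) h1
      (Or.inr (measure_ne_top P _))
    simpa using h2
  refine le_antisymm ?_ zero_le
  refine ge_of_tendsto htend (Filter.Eventually.of_forall fun j => ?_)
  exact (measure_mono (Set.iInter_subset _ j)).trans (Nset_bound hP hf j π hh)

/-- Deterministic checkpoints along a play. -/
def grid (f : List V → Finset (List V)) (ρ : ℕ → V) : ℕ → ℕ
  | 0 => 1
  | k+1 => nextLen f (pref ρ (grid f ρ k))

/-- The proposal at checkpoint `k` is realised by `ρ`. -/
def Success (f : List V → Finset (List V)) (ρ : ℕ → V) (k : ℕ) : Prop :=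
  ∃ τ ∈ f (pref ρ (grid f ρ k)),
    pref ρ (grid f ρ k + τ.length) = pref ρ (grid f ρ k) ++ τ

lemma grid_succ_eq (f : List V → Finset (List V)) (ρ : ℕ → V) (k : ℕ) :
    grid f ρ (k + 1) = grid f ρ k + Lmax f (pref ρ (grid f ρ k)) + 1 := by
  show nextLen _ _ = _
  rw [nextLen, pref_length]

lemma grid_lt_succ (f : List V → Finset (List V)) (ρ : ℕ → V) (k : ℕ) :
    grid f ρ k < grid f ρ (k + 1) := by
  rw [grid_succ_eq]; omega

lemma grid_strictMono (f : List V → Finset (List V)) (ρ : ℕ → V) :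
    StrictMono (grid f ρ) := strictMono_nat_of_lt_succ (grid_lt_succ f ρ)

lemma one_le_grid (f : List V → Finset (List V)) (ρ : ℕ → V) (k : ℕ) :
    1 ≤ grid f ρ k := by
  induction k with
  | zero => exact le_rfl
  | succ k ih => exact ih.trans (grid_lt_succ f ρ k).le

lemma mem_Nset_of_fail {f : List V → Finset (List V)} {ρ : ℕ → V} :
    ∀ (j m : ℕ), (∀ k, m ≤ k → ¬ Success f ρ k) →
      ρ ∈ Nset f j (pref ρ (grid f ρ m)) := by
  intro j
  induction j with
  | zero => intro m _; exact mem_Cyl_pref ρ _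
  | succ j ih =>
    intro m hfail
    set π := pref ρ (grid f ρ m) with hπ
    have hnext : grid f ρ (m+1) = nextLen f π := rfl
    refine Set.mem_biUnion (s := FailExt f π) (x := pref ρ (grid f ρ (m + 1))) ?_ ?_
    · refine ⟨pref_length ρ _, ?_, ?_⟩
      · rw [hπ, pref_length]
        exact pref_take ρ (grid_lt_succ f ρ m).le
      · rw [Set.disjoint_left]
        rintro ρ' h1 h2
        simp only [Bset, Set.mem_iUnion] at h2
        obtain ⟨τ, hτ, h2⟩ := h2
        refine hfail m le_rfl ⟨τ, hτ, ?_⟩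
        have hlen : grid f ρ m + τ.length ≤ grid f ρ (m + 1) := by
          rw [grid_succ_eq]
          have h3 : τ.length ≤ Lmax f (pref ρ (grid f ρ m)) :=
            Finset.le_sup (f := List.length) (by rw [← hπ]; exact hτ)
          omega
        have e1 : pref ρ' (grid f ρ m + τ.length) = π ++ τ := by
          have := (mem_Cyl.1 h2)
          rwa [List.length_append, hπ, pref_length] at this
        have e2 : pref ρ' (grid f ρ m + τ.length) = pref ρ (grid f ρ m + τ.length) := by
          have h1' : pref ρ' (grid f ρ (m+1)) = pref ρ (grid f ρ (m+1)) := by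
            have := mem_Cyl.1 h1
            rwa [pref_length] at this
          calc pref ρ' (grid f ρ m + τ.length)
              = (pref ρ' (grid f ρ (m+1))).take (grid f ρ m + τ.length) :=
                (pref_take ρ' hlen).symm
            _ = (pref ρ (grid f ρ (m+1))).take (grid f ρ m + τ.length) := by rw [h1']
            _ = pref ρ (grid f ρ m + τ.length) := pref_take ρ hlen
        rw [← e2, e1, hπ]
    · have := ih (m + 1) (fun k hk => hfail k (by omega))
      rwa [hnext] at this

lemma consAlpha_of_inf {f : List V → Finset (List V)} {ρ : ℕ → V}
    (h : ∀ m, ∃ k, m ≤ k ∧ Success f ρ k) : ConsAlpha f ρ := by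
  -- build an increasing sequence of successful checkpoints
  obtain ⟨k, hks, hkmono⟩ : ∃ k : ℕ → ℕ, (∀ i, Success f ρ (k i)) ∧ ∀ i, k i < k (i + 1) := by
    set g : ℕ → ℕ := fun m => (h (m + 1)).choose with hg
    have hgs : ∀ m, m < g m ∧ Success f ρ (g m) := fun m =>
      ⟨(h (m + 1)).choose_spec.1, (h (m + 1)).choose_spec.2⟩
    refine ⟨fun i => g^[i] ((h 0).choose), ?_, ?_⟩
    · intro i
      induction i with
      | zero => exact (h 0).choose_spec.2
      | succ i _ =>
        show Success f ρ (g^[i + 1] ((h 0).choose))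
        rw [Function.iterate_succ_apply']
        exact (hgs _).2
    · intro i
      show g^[i] ((h 0).choose) < g^[i + 1] ((h 0).choose)
      rw [Function.iterate_succ_apply']
      exact (hgs _).1
  refine ⟨fun i => grid f ρ (k i), one_le_grid f ρ _, fun i => ?_⟩
  obtain ⟨τ, hτ, hmatch⟩ := hks i
  refine ⟨τ, hτ, hmatch, ?_⟩
  have h1 : grid f ρ (k i) + τ.length < grid f ρ (k i + 1) := by
    rw [grid_succ_eq]
    have : τ.length ≤ Lmax f (pref ρ (grid f ρ (k i))) := Finset.le_sup (f := List.length) hτ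
    omega
  exact h1.trans_le (grid_strictMono f ρ |>.monotone (hkmono i))

/-- Main lemma: a winning α-strategy with α > 0 forces `P Wᶜ = 0`. -/
lemma null_compl_of_alphaWinning (hP : IsReasonable E v₀ w P)
    {f : List V → Finset (List V)} {α : ℝ} (hα : 0 < α)
    (hwin : AlphaWinning E v₀ P α W f) : P Wᶜ = 0 := by
  have hsub : Wᶜ ⊆ {ρ | ¬ IsPlay E v₀ ρ} ∪
      ⋃ (π : List V) (_ : π.head? = some v₀), ⋂ j, Nset f j π := by
    intro ρ hρ
    by_cases hplay : IsPlay E v₀ ρ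
    · right
      have hnc : ¬ ConsAlpha f ρ := fun hc => hρ (hwin.2 ρ hplay hc)
      have : ¬ ∀ m, ∃ k, m ≤ k ∧ Success f ρ k := fun h => hnc (consAlpha_of_inf h)
      push_neg at this
      obtain ⟨m, hm⟩ := this
      refine Set.mem_iUnion₂.2 ⟨pref ρ (grid f ρ m), ?_, ?_⟩
      · rw [head?_pref (one_le_grid f ρ m), hplay.1]
      · exact Set.mem_iInter.2 fun j =>
          mem_Nset_of_fail j m hm
    · exact Or.inl hplay
  refine measure_mono_null hsub (measure_union_null (P_nonPlays hP) ?_)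
  refine measure_iUnion_null fun π => ?_
  by_cases hh : π.head? = some v₀
  · exact measure_mono_null (Set.iUnion_subset fun _ => le_rfl)
      (P_iInter_Nset hP hwin.1 hα π hh)
  · simp [hh]

end BtoA

section AtoC
variable [Fintype V] [MeasurableSpace V] [DiscreteMeasurableSpace V]
  {E : V → V → Prop} {v₀ : V} {w : V → V → ℝ≥0} {P : Measure (ℕ → V)}
  {W : Set (ℕ → V)}

lemma exists_proposal (hP : IsReasonable E v₀ w P) (hE : ∀ x, ∃ y, E x y)
    (hw : ∀ u v, E u v → 0 < w u v) {U : ℕ → Set (ℕ → V)}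
    (hU : ∀ n, IsCylOpen (U n)) (hUnull : ∀ n, P (U n)ᶜ = 0)
    {α : ℝ} (hα0 : 0 < α) (hα1 : α < 1) (π : List V) (hπ : IsPos E v₀ π) :
    ∃ Ps : Finset (List V), LegalProposal E P α π Ps ∧
      ∀ τ ∈ Ps, ∀ n ≤ π.length, Cyl (π ++ τ) ⊆ U n := by
  classical
  haveI : Inhabited V := ⟨v₀⟩
  obtain ⟨hPC0, hPCtop⟩ := P_Cyl_pos hP hE hw hπ
  set K : Set (ℕ → V) := Cyl π ∩ ⋂ n ∈ Finset.range (π.length + 1), U n with hK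
  have hπmem : ∀ ρ ∈ Cyl π, pref ρ π.length = π := fun ρ h => mem_Cyl.1 h
  -- K has the same measure as Cyl π
  have hPK : P K = P (Cyl π) := by
    refine measure_inter_conull ?_
    have : (⋂ n ∈ Finset.range (π.length + 1), U n)ᶜ =
        ⋃ n ∈ Finset.range (π.length + 1), (U n)ᶜ := by
      simp [Set.compl_iInter]
    rw [this]
    refine measure_mono_null le_rfl ?_
    refine (measure_biUnion_null_iff (Set.to_countable _)).2 fun n _ => hUnull n
  set T : Set (List V) := {σ | π.length < σ.length ∧ Cyl σ ⊆ K} with hT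
  -- K is covered by the cylinders in T
  have hcover : K ⊆ ⋃ σ ∈ T, Cyl σ := by
    intro ρ hρ
    have hρπ : ρ ∈ Cyl π := hρ.1
    have hch : ∀ n, ∃ σ : List V, ρ ∈ Cyl σ ∧ (n ≤ π.length → Cyl σ ⊆ U n) := by
      intro n
      by_cases hn : n ≤ π.length
      · have hρU : ρ ∈ U n := by
          have := hρ.2
          simp only [Set.mem_iInter, Finset.mem_range] at this
          exact this n (by omega)
        obtain ⟨S, hS⟩ := hU n
        rw [hS] at hρU
        obtain ⟨σ, hσS, hρσ⟩ := Set.mem_iUnion₂.1 hρU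
        exact ⟨σ, hρσ, fun _ => by rw [hS]; exact Set.subset_biUnion_of_mem hσS⟩
      · exact ⟨[], by simp [mem_Cyl, pref], fun h => absurd h hn⟩
    choose σs h1 h2 using hch
    set N : ℕ := π.length + 1 + (Finset.range (π.length + 1)).sup (fun n => (σs n).length)
      with hN
    have hNπ : π.length < N := by omega
    have hNσ : ∀ n ≤ π.length, (σs n).length ≤ N := by
      intro n hn
      have hmem : n ∈ Finset.range (π.length + 1) := Finset.mem_range.2 (by omega)
      have h4 := Finset.le_sup (f := fun n => (σs n).length) hmem
      have h5 : ((fun n => (σs n).length) n : ℕ) = (σs n).length := rfl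
      omega
    refine Set.mem_biUnion (s := T) (x := pref ρ N) ⟨?_, ?_⟩ (mem_Cyl_pref ρ N)
    · rw [pref_length]; exact hNπ
    · refine Set.subset_inter ?_ ?_
      · refine Cyl_subset_of_take (by rw [pref_length]; omega) ?_
        rw [pref_take ρ hNπ.le]
        exact hπmem ρ hρπ
      · refine Set.subset_iInter₂ fun n hn => ?_
        rw [Finset.mem_range] at hn
        have hn' : n ≤ π.length := by omega
        refine (Cyl_subset_of_take (π := σs n) ?_ ?_).trans (h2 n hn')
        · rw [pref_length]; exact hNσ n hn'
        · rw [pref_take ρ (hNσ n hn')]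
          exact mem_Cyl.1 (h1 n)
  -- T is nonempty
  have hTne : T.Nonempty := by
    by_contra hemp
    rw [Set.not_nonempty_iff_eq_empty] at hemp
    have : K ⊆ ∅ := by rw [hemp] at hcover; simpa using hcover
    have : P K = 0 := measure_mono_null this (measure_empty)
    rw [hPK] at this
    exact hPC0.ne' this
  obtain ⟨e, he⟩ := Set.Countable.exists_eq_range (Set.to_countable T) hTne
  -- extract a finite subfamily of measure > α * P (Cyl π)
  have hmono : Monotone (fun n => ⋃ i ∈ Set.Iio n, Cyl (e i)) := by
    intro a b hab
    show (⋃ i ∈ Set.Iio a, Cyl (e i)) ⊆ ⋃ i ∈ Set.Iio b, Cyl (e i)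
    refine Set.iUnion₂_subset fun i hi => ?_
    exact Set.subset_biUnion_of_mem (u := fun i => Cyl (e i)) (show i ∈ Set.Iio b from lt_of_lt_of_le hi hab)
  have hPcup : P (⋃ n, ⋃ i ∈ Set.Iio n, Cyl (e i)) =
      ⨆ n, P (⋃ i ∈ Set.Iio n, Cyl (e i)) :=
    hmono.directed_le.measure_iUnion
  have hcupT : (⋃ n, ⋃ i ∈ Set.Iio n, Cyl (e i)) = ⋃ σ ∈ T, Cyl σ := by
    rw [he]
    ext ρ
    simp only [Set.mem_iUnion, Set.mem_Iio, Set.mem_range]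
    constructor
    · rintro ⟨n, i, _, h⟩; exact ⟨e i, ⟨i, rfl⟩, h⟩
    · rintro ⟨σ, ⟨i, rfl⟩, h⟩; exact ⟨i + 1, i, by omega, h⟩
  have hlt : ENNReal.ofReal α * P (Cyl π) < ⨆ n, P (⋃ i ∈ Set.Iio n, Cyl (e i)) := by
    rw [← hPcup, hcupT]
    calc ENNReal.ofReal α * P (Cyl π) < 1 * P (Cyl π) := by
          rw [ENNReal.mul_lt_mul_iff_left hPC0.ne' hPCtop.ne]
          exact ENNReal.ofReal_lt_one.2 hα1
      _ = P (Cyl π) := one_mul _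
      _ = P K := hPK.symm
      _ ≤ P (⋃ σ ∈ T, Cyl σ) := measure_mono hcover
  obtain ⟨n, hn⟩ := lt_iSup_iff.1 hlt
  set F0 : Finset (List V) := (Finset.range n).image e with hF0
  have hF0T : ∀ σ ∈ F0, σ ∈ T := by
    intro σ hσ
    rw [hF0, Finset.mem_image] at hσ
    obtain ⟨i, _, rfl⟩ := hσ
    rw [he]; exact ⟨i, rfl⟩
  have hF0eq : (⋃ i ∈ Set.Iio n, Cyl (e i)) = ⋃ σ ∈ F0, Cyl σ := by
    ext ρ
    simp only [Set.mem_iUnion, hF0, Finset.mem_image, Finset.mem_range, Set.mem_Iio]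
    constructor
    · rintro ⟨i, hi, h⟩; exact ⟨e i, ⟨i, hi, rfl⟩, h⟩
    · rintro ⟨σ, ⟨i, hi, rfl⟩, h⟩; exact ⟨i, hi, h⟩
  rw [hF0eq] at hn
  -- basic facts about members of F0
  have htake : ∀ σ ∈ F0, σ.take π.length = π := by
    intro σ hσ
    obtain ⟨ρ, hρ⟩ := Cyl_nonempty σ
    have hρπ : ρ ∈ Cyl π := ((hF0T σ hσ).2.trans Set.inter_subset_left) hρ
    exact take_of_mem_Cyl hρ hρπ (hF0T σ hσ).1.le
  have hhead : ∀ σ ∈ F0, σ.head? = some v₀ := fun σ hσ =>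
    head?_of_take (htake σ hσ) hπ.1
  -- drop the non-chains (they are null)
  set F : Finset (List V) := F0.filter (fun σ => σ.Chain' E) with hF
  have hFnull : P (⋃ σ ∈ (F0.filter (fun σ => ¬ σ.Chain' E) : Finset (List V)), Cyl σ) = 0 := by
    refine (measure_biUnion_null_iff (Set.to_countable _)).2 fun σ hσ => ?_
    have hσ2 : σ ∈ F0.filter (fun σ => ¬ σ.Chain' E) := hσ
    have hσ' := Finset.mem_filter.1 hσ2
    exact P_Cyl_null_nonchain hP (hhead σ hσ'.1) (by simpa using hσ'.2)
  have hPF : ENNReal.ofReal α * P (Cyl π) < P (⋃ σ ∈ F, Cyl σ) := by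
    refine hn.trans_le ?_
    have hsub : (⋃ σ ∈ F0, Cyl σ) ⊆ (⋃ σ ∈ F, Cyl σ) ∪
        (⋃ σ ∈ (F0.filter (fun σ => ¬ σ.Chain' E) : Finset (List V)), Cyl σ) := by
      intro ρ hρ
      obtain ⟨σ, hσ, h⟩ := Set.mem_iUnion₂.1 hρ
      by_cases hc : σ.Chain' E
      · exact Or.inl (Set.mem_biUnion (by rw [hF]; exact Finset.mem_filter.2 ⟨hσ, hc⟩) h)
      · exact Or.inr (Set.mem_biUnion (Finset.mem_filter.2 ⟨hσ, hc⟩) h)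
    calc P (⋃ σ ∈ F0, Cyl σ) ≤ _ := measure_mono hsub
      _ ≤ P (⋃ σ ∈ F, Cyl σ) + P (⋃ σ ∈ (F0.filter (fun σ => ¬ σ.Chain' E) : Finset (List V)), Cyl σ) :=
          measure_union_le _ _
      _ = P (⋃ σ ∈ F, Cyl σ) := by rw [hFnull, add_zero]
  -- the proposal
  refine ⟨F.image (fun σ => σ.drop π.length), ?_, ?_⟩
  · have hkey : ∀ σ ∈ F, π ++ σ.drop π.length = σ := by
      intro σ hσ
      rw [hF, Finset.mem_filter] at hσ
      conv_rhs => rw [← List.take_append_drop π.length σ]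
      rw [htake σ hσ.1]
    have hUeq : (⋃ τ ∈ F.image (fun σ => σ.drop π.length), Cyl (π ++ τ)) =
        ⋃ σ ∈ F, Cyl σ := by
      ext ρ
      simp only [Set.mem_iUnion, Finset.mem_image]
      constructor
      · rintro ⟨τ, ⟨σ, hσ, rfl⟩, h⟩
        exact ⟨σ, hσ, by rwa [hkey σ hσ] at h⟩
      · rintro ⟨σ, hσ, h⟩
        exact ⟨σ.drop π.length, ⟨σ, hσ, rfl⟩, by rwa [hkey σ hσ]⟩
    refine ⟨?_, ?_, ?_⟩
    · -- nonempty
      rw [Finset.image_nonempty]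
      rcases Finset.eq_empty_or_nonempty F with hemp | hne
      · exfalso
        rw [hemp] at hPF
        simp at hPF
      · exact hne
    · intro τ hτ
      rw [Finset.mem_image] at hτ
      obtain ⟨σ, hσ, rfl⟩ := hτ
      have hlen : π.length < σ.length := (hF0T σ (Finset.mem_filter.1 (hF ▸ hσ)).1).1
      constructor
      · intro hnil
        have := congrArg List.length hnil
        simp only [List.length_drop, List.length_nil] at this
        omega
      · rw [hkey σ hσ]
        exact (Finset.mem_filter.1 (hF ▸ hσ)).2
    · rw [hUeq]
      rw [ENNReal.le_div_iff_mul_le (Or.inl hPC0.ne') (Or.inl hPCtop.ne)]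
      exact hPF.le
  · intro τ hτ n hn
    rw [Finset.mem_image] at hτ
    obtain ⟨σ, hσ, rfl⟩ := hτ
    have hkey : π ++ σ.drop π.length = σ := by
      conv_rhs => rw [← List.take_append_drop π.length σ]
      rw [htake σ (Finset.mem_filter.1 (hF ▸ hσ)).1]
    rw [hkey]
    have hσT : σ ∈ T := hF0T σ (Finset.mem_filter.1 (hF ▸ hσ)).1
    refine hσT.2.trans ?_
    refine Set.inter_subset_right.trans ?_
    exact Set.iInter₂_subset n (Finset.mem_range.2 (by omega))

lemma exists_alphaWinning (hP : IsReasonable E v₀ w P) (hE : ∀ x, ∃ y, E x y)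
    (hw : ∀ u v, E u v → 0 < w u v) (hGδ : IsCountableInterOfOpens E v₀ W)
    (hnull : P Wᶜ = 0) {α : ℝ} (hα0 : 0 < α) (hα1 : α < 1) :
    ∃ f : List V → Finset (List V), AlphaWinning E v₀ P α W f := by
  classical
  obtain ⟨U, hU, hW⟩ := hGδ
  have hUnull : ∀ n, P (U n)ᶜ = 0 := by
    intro n
    refine measure_mono_null ?_ hnull
    rw [hW]
    intro ρ hρ hρW
    exact hρ (Set.mem_iInter.1 hρW.2 n)
  have hex := fun (π : List V) (h : IsPos E v₀ π) =>
    exists_proposal hP hE hw hU hUnull hα0 hα1 π h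
  refine ⟨fun π => if h : IsPos E v₀ π then (hex π h).choose else {[v₀]}, ?_, ?_⟩
  · intro π hπ
    simp only [dif_pos hπ]
    exact (hex π hπ).choose_spec.1
  · rintro ρ hplay ⟨c, hc0, hc⟩
    rw [hW]
    refine ⟨hplay, Set.mem_iInter.2 fun n => ?_⟩
    -- the cut points are strictly increasing, hence unbounded
    have hcmono : ∀ i, c i < c (i + 1) := by
      intro i
      obtain ⟨τ, _, _, hlt⟩ := hc i
      omega
    have hclb : ∀ i, i + 1 ≤ c i := by
      intro i
      induction i with
      | zero => simpa using hc0
      | succ i ih => have := hcmono i; omega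
    have hn : n ≤ c n := by have := hclb n; omega
    have hcn1 : 1 ≤ c n := by have := hclb n; omega
    have hpos : IsPos E v₀ (pref ρ (c n)) := isPos_pref hplay hcn1
    obtain ⟨τ, hτmem, hmatch, _⟩ := hc n
    simp only [dif_pos hpos] at hτmem
    have hincl := (hex _ hpos).choose_spec.2 τ hτmem n (by rw [pref_length]; exact hn)
    refine hincl ?_
    rw [mem_Cyl, List.length_append, pref_length]
    exact hmatch
  
end AtoC
end BMGame

open BMGame

/-- For `W` a countable intersection of open subsets of `Paths (G, v₀)` and `P` a
reasonable probability measure, the following are equivalent: `P (W) = 1`; Player 0 has a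
winning α-strategy for some `α > 0`; Player 0 has a winning α-strategy for every
`0 < α < 1`. -/
theorem stmt13 {V : Type*} [Fintype V] [MeasurableSpace V] [DiscreteMeasurableSpace V]
    (E : V → V → Prop) (hE : ∀ v, ∃ u, E v u) (v₀ : V)
    (W : Set (ℕ → V)) (hGδ : IsCountableInterOfOpens E v₀ W)
    (w : V → V → ℝ≥0) (hw : ∀ u v, E u v → 0 < w u v)
    (P : MeasureTheory.Measure (ℕ → V)) (hP : IsReasonable E v₀ w P) :
    (P Wᶜ = 0 ↔ ∃ α : ℝ, 0 < α ∧ ∃ f : List V → Finset (List V), AlphaWinning E v₀ P α W f) ∧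
    (P Wᶜ = 0 ↔ ∀ α : ℝ, 0 < α → α < 1 →
      ∃ f : List V → Finset (List V), AlphaWinning E v₀ P α W f) := by
  constructor
  · constructor
    · intro h
      obtain ⟨f, hf⟩ := exists_alphaWinning hP hE hw hGδ h
        (by norm_num : (0:ℝ) < 1/2) (by norm_num : (1:ℝ)/2 < 1)
      exact ⟨1/2, by norm_num, f, hf⟩
    · rintro ⟨α, hα, f, hf⟩
      exact null_compl_of_alphaWinning hP hα hf
  · constructor
    · intro h α hα0 hα1
      exact exists_alphaWinning hP hE hw hGδ h hα0 hα1
    · intro h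
      obtain ⟨f, hf⟩ := h (1/2) (by norm_num) (by norm_num)
      exact null_compl_of_alphaWinning hP (by norm_num : (0:ℝ) < 1/2) hf
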